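/- Let (Ω, F, P) be a probability space, S a metric space equipped with its Borel σ-algebra, and (X_n)_{n≥1} measurable maps from Ω to S. Let (A_n)_{n≥1} and (B_n)_{n≥1} be sequences of events with P(A_n) > 0 and P(B_n) > 0 for all n, such that P(A_n | B_n) → 1 and P(B_n | A_n) → 1 as n → ∞. If the laws of X_n under the conditional probability measures P(· | A_n) converge weakly to the law of a random variable X (i.e. to a fixed Borel probability measure ν on S), then the laws of X_n under the conditional probability measures P(· | B_n) also converge weakly to ν. -/

import Mathlib

open MeasureTheory ProbabilityTheory Filter

lemma cond_integral_diff_bound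
    {Ω : Type*} [MeasurableSpace Ω] (P : Measure Ω) [IsProbabilityMeasure P]
    {S : Type*} [MetricSpace S] [MeasurableSpace S] [BorelSpace S]
    (X : Ω → S) (hX : Measurable X)
    (A B : Set Ω) (hAm : MeasurableSet A) (hBm : MeasurableSet B)
    (hA : P A ≠ 0) (hB : P B ≠ 0) (f : BoundedContinuousFunction S ℝ) :
    |∫ ω, f (X ω) ∂(P[|B]) - ∫ ω, f (X ω) ∂(P[|A])| ≤
      ‖f‖ * ((1 - ((P[|B]) A).toReal) + (1 - ((P[|A]) B).toReal)
        + |((P[|B]) A).toReal - ((P[|A]) B).toReal|) := by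
  haveI hPA : IsProbabilityMeasure (P[|A]) := cond_isProbabilityMeasure hA
  haveI hPB : IsProbabilityMeasure (P[|B]) := cond_isProbabilityMeasure hB
  set g : Ω → ℝ := fun ω => f (X ω) with hg
  have hgm : Measurable g := f.continuous.measurable.comp hX
  have hgb : ∀ ω, ‖g ω‖ ≤ ‖f‖ := fun ω => f.norm_coe_le_norm _
  have hgint : ∀ (μ : Measure Ω) [IsFiniteMeasure μ], Integrable g μ := fun μ _ =>
    (integrable_const ‖f‖).mono' hgm.aestronglyMeasurable (ae_of_all _ hgb)
  -- decompose
  have hsplitB : ∫ ω, g ω ∂(P[|B]) = (∫ ω in A, g ω ∂(P[|B])) + ∫ ω in Aᶜ, g ω ∂(P[|B]) :=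
    (integral_add_compl hAm (hgint _)).symm
  have hsplitA : ∫ ω, g ω ∂(P[|A]) = (∫ ω in B, g ω ∂(P[|A])) + ∫ ω in Bᶜ, g ω ∂(P[|A]) :=
    (integral_add_compl hBm (hgint _)).symm
  -- main terms
  have hmainB : ∫ ω in A, g ω ∂(P[|B]) = (P B).toReal⁻¹ * ∫ ω in A ∩ B, g ω ∂P := by
    rw [show (P[|B]) = (P B)⁻¹ • P.restrict B from rfl, Measure.restrict_smul,
      Measure.restrict_restrict hAm, integral_smul_measure,
      ENNReal.toReal_inv, smul_eq_mul]
  have hmainA : ∫ ω in B, g ω ∂(P[|A]) = (P A).toReal⁻¹ * ∫ ω in A ∩ B, g ω ∂P := by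
    rw [show (P[|A]) = (P A)⁻¹ • P.restrict A from rfl, Measure.restrict_smul,
      Measure.restrict_restrict hBm, Set.inter_comm, integral_smul_measure,
      ENNReal.toReal_inv, smul_eq_mul]
  -- values of conditional probabilities
  have hcondB : ((P[|B]) A).toReal = (P B).toReal⁻¹ * (P (A ∩ B)).toReal := by
    rw [cond_apply hBm, Set.inter_comm, ENNReal.toReal_mul, ENNReal.toReal_inv]
  have hcondA : ((P[|A]) B).toReal = (P A).toReal⁻¹ * (P (A ∩ B)).toReal := by
    rw [cond_apply hAm, ENNReal.toReal_mul, ENNReal.toReal_inv]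
  -- tail bounds
  have htailB : |∫ ω in Aᶜ, g ω ∂(P[|B])| ≤ ‖f‖ * (1 - ((P[|B]) A).toReal) := by
    have h1 : ((P[|B]) Aᶜ).toReal = 1 - ((P[|B]) A).toReal := by
      rw [prob_compl_eq_one_sub hAm, ENNReal.toReal_sub_of_le prob_le_one ENNReal.one_ne_top,
        ENNReal.toReal_one]
    calc |∫ ω in Aᶜ, g ω ∂(P[|B])| ≤ ‖f‖ * ((P[|B]) Aᶜ).toReal :=
          norm_setIntegral_le_of_norm_le_const_ae (measure_lt_top _ _)
            (ae_of_all _ hgb)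
      _ = ‖f‖ * (1 - ((P[|B]) A).toReal) := by rw [h1]
  have htailA : |∫ ω in Bᶜ, g ω ∂(P[|A])| ≤ ‖f‖ * (1 - ((P[|A]) B).toReal) := by
    have h1 : ((P[|A]) Bᶜ).toReal = 1 - ((P[|A]) B).toReal := by
      rw [prob_compl_eq_one_sub hBm, ENNReal.toReal_sub_of_le prob_le_one ENNReal.one_ne_top,
        ENNReal.toReal_one]
    calc |∫ ω in Bᶜ, g ω ∂(P[|A])| ≤ ‖f‖ * ((P[|A]) Bᶜ).toReal :=
          norm_setIntegral_le_of_norm_le_const_ae (measure_lt_top _ _)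
            (ae_of_all _ hgb)
      _ = ‖f‖ * (1 - ((P[|A]) B).toReal) := by rw [h1]
  -- main diff bound
  have hI : |∫ ω in A ∩ B, g ω ∂P| ≤ ‖f‖ * (P (A ∩ B)).toReal :=
    norm_setIntegral_le_of_norm_le_const_ae (measure_lt_top _ _)
      (ae_of_all _ hgb)
  have hfnn : (0:ℝ) ≤ ‖f‖ := norm_nonneg f
  have hmain : |∫ ω in A, g ω ∂(P[|B]) - ∫ ω in B, g ω ∂(P[|A])| ≤
      ‖f‖ * |((P[|B]) A).toReal - ((P[|A]) B).toReal| := by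
    rw [hmainB, hmainA, ← sub_mul, hcondB, hcondA, ← sub_mul, abs_mul, abs_mul]
    have h2 : |(P (A ∩ B)).toReal| = (P (A ∩ B)).toReal := abs_of_nonneg ENNReal.toReal_nonneg
    rw [h2]
    calc |(P B).toReal⁻¹ - (P A).toReal⁻¹| * |∫ ω in A ∩ B, g ω ∂P|
        ≤ |(P B).toReal⁻¹ - (P A).toReal⁻¹| * (‖f‖ * (P (A ∩ B)).toReal) := by
          refine mul_le_mul_of_nonneg_left ?_ (abs_nonneg _)
          exact hI
      _ = ‖f‖ * (|(P B).toReal⁻¹ - (P A).toReal⁻¹| * (P (A ∩ B)).toReal) := by ring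
  -- combine
  rw [hsplitB, hsplitA]
  calc |(∫ ω in A, g ω ∂(P[|B]) + ∫ ω in Aᶜ, g ω ∂(P[|B])) -
        (∫ ω in B, g ω ∂(P[|A]) + ∫ ω in Bᶜ, g ω ∂(P[|A]))|
      ≤ |∫ ω in A, g ω ∂(P[|B]) - ∫ ω in B, g ω ∂(P[|A])| +
        |∫ ω in Aᶜ, g ω ∂(P[|B])| + |∫ ω in Bᶜ, g ω ∂(P[|A])| := by
        rw [show (∫ ω in A, g ω ∂(P[|B]) + ∫ ω in Aᶜ, g ω ∂(P[|B])) -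
            (∫ ω in B, g ω ∂(P[|A]) + ∫ ω in Bᶜ, g ω ∂(P[|A])) =
            (∫ ω in A, g ω ∂(P[|B]) - ∫ ω in B, g ω ∂(P[|A])) +
            (∫ ω in Aᶜ, g ω ∂(P[|B]) - ∫ ω in Bᶜ, g ω ∂(P[|A])) from by ring]
        refine (abs_add_le _ _).trans ?_
        have h3 := abs_sub (∫ ω in Aᶜ, g ω ∂(P[|B])) (∫ ω in Bᶜ, g ω ∂(P[|A]))
        linarith
    _ ≤ ‖f‖ * |((P[|B]) A).toReal - ((P[|A]) B).toReal| +
        ‖f‖ * (1 - ((P[|B]) A).toReal) + ‖f‖ * (1 - ((P[|A]) B).toReal) := by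
        exact add_le_add (add_le_add hmain htailB) htailA
    _ = ‖f‖ * ((1 - ((P[|B]) A).toReal) + (1 - ((P[|A]) B).toReal)
        + |((P[|B]) A).toReal - ((P[|A]) B).toReal|) := by ring

/-- If `P(Aₙ | Bₙ) → 1` and `P(Bₙ | Aₙ) → 1`, and the laws of `Xₙ` under the conditional
measures `P(· | Aₙ)` converge weakly to a fixed Borel probability measure `ν`, then the laws
of `Xₙ` under `P(· | Bₙ)` also converge weakly to `ν`. -/
theorem conditional_weak_convergence_transfer
    {Ω : Type*} [MeasurableSpace Ω] (P : Measure Ω) [IsProbabilityMeasure P]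
    {S : Type*} [MetricSpace S] [MeasurableSpace S] [BorelSpace S]
    (X : ℕ → Ω → S) (hX : ∀ n, Measurable (X n))
    (A B : ℕ → Set Ω) (hAm : ∀ n, MeasurableSet (A n)) (hBm : ∀ n, MeasurableSet (B n))
    (hApos : ∀ n, 0 < P (A n)) (hBpos : ∀ n, 0 < P (B n))
    (hAB : Tendsto (fun n => (P[|B n]) (A n)) atTop (nhds 1))
    (hBA : Tendsto (fun n => (P[|A n]) (B n)) atTop (nhds 1))
    (ν : Measure S) [IsProbabilityMeasure ν]
    (hconv : ∀ f : BoundedContinuousFunction S ℝ,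
      Tendsto (fun n => ∫ x, f x ∂(Measure.map (X n) (P[|A n]))) atTop
        (nhds (∫ x, f x ∂ν))) :
    ∀ f : BoundedContinuousFunction S ℝ,
      Tendsto (fun n => ∫ x, f x ∂(Measure.map (X n) (P[|B n]))) atTop
        (nhds (∫ x, f x ∂ν)) := by
  intro f
  have hAne : ∀ n, P (A n) ≠ 0 := fun n => (hApos n).ne'
  have hBne : ∀ n, P (B n) ≠ 0 := fun n => (hBpos n).ne'
  have hmap : ∀ n (μ : Measure Ω), ∫ x, f x ∂(Measure.map (X n) μ) = ∫ ω, f (X n ω) ∂μ :=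
    fun n μ => integral_map (hX n).aemeasurable f.continuous.measurable.aestronglyMeasurable
  have hga : Tendsto (fun n => ∫ ω, f (X n ω) ∂(P[|A n])) atTop (nhds (∫ x, f x ∂ν)) := by
    have := hconv f
    simp only [hmap] at this
    exact this
  have ha : Tendsto (fun n => ((P[|B n]) (A n)).toReal) atTop (nhds 1) := by
    have := (ENNReal.tendsto_toReal ENNReal.one_ne_top).comp hAB
    exact this
  have hb : Tendsto (fun n => ((P[|A n]) (B n)).toReal) atTop (nhds 1) := by
    have := (ENNReal.tendsto_toReal ENNReal.one_ne_top).comp hBA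
    exact this
  have hu : Tendsto (fun n => ‖f‖ * ((1 - ((P[|B n]) (A n)).toReal)
      + (1 - ((P[|A n]) (B n)).toReal)
      + |((P[|B n]) (A n)).toReal - ((P[|A n]) (B n)).toReal|)) atTop (nhds 0) := by
    have : Tendsto (fun n => (1 - ((P[|B n]) (A n)).toReal)
        + (1 - ((P[|A n]) (B n)).toReal)
        + |((P[|B n]) (A n)).toReal - ((P[|A n]) (B n)).toReal|) atTop
        (nhds ((1 - 1) + (1 - 1) + |1 - (1:ℝ)|)) := by
      exact (((tendsto_const_nhds.sub ha).add (tendsto_const_nhds.sub hb)).add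
        ((ha.sub hb).abs))
    simpa using tendsto_const_nhds.mul this
  have hdiff : Tendsto (fun n => (∫ ω, f (X n ω) ∂(P[|B n])) - ∫ ω, f (X n ω) ∂(P[|A n]))
      atTop (nhds 0) := by
    refine squeeze_zero_norm (fun n => ?_) hu
    exact cond_integral_diff_bound P (X n) (hX n) (A n) (B n) (hAm n) (hBm n)
      (hAne n) (hBne n) f
  have : Tendsto (fun n => ∫ ω, f (X n ω) ∂(P[|B n])) atTop (nhds (∫ x, f x ∂ν)) := by
    have := hdiff.add hga
    simpa using this
  simpa only [hmap] using this
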